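/- arXiv:1206.3219 — 2 statements merged into one kernel-verified Lean document; each statement's English description precedes it below -/
import Mathlib

section
/- Let v, w : ℝ^d → ℝ^d be bounded Lipschitz vector fields with Lipschitz constant L > 0, and let μ, ν ∈ M_0^{ac} have equal total mass. Then for every t ≥ 0, W_p(Φ^v_t#μ, Φ^w_t#ν) ≤ e^{((p+1)/p)·L·t} · W_p(μ, ν) + μ(ℝ^d)^{1/p} · (e^{Lt/p}(e^{Lt}−1)/L) · ‖v−w‖_{C^0}, where ‖v−w‖_{C^0} = sup_{x∈ℝ^d} |v(x)−w(x)|. -/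
open MeasureTheory ENNReal Filter Topology

noncomputable section

/-- `ℝ^d` as a Euclidean space. -/
abbrev Euc (d : ℕ) := EuclideanSpace ℝ (Fin d)

variable {E : Type*} [NormedAddCommGroup E] [MeasurableSpace E]

/-- Total mass `|μ| = μ(ℝ^d)` of a nonnegative measure, as a real number. -/
def mass (μ : Measure E) : ℝ := (μ Set.univ).toReal

/-- Total variation norm `|μ - ν|` of the difference of two nonnegative finite
measures, computed via the Jordan decomposition `(μ - ν) + (ν - μ)`. -/
def tvDist (μ ν : Measure E) : ℝ := ((μ - ν) Set.univ + (ν - μ) Set.univ).toReal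

/-- `μ` has finite `p`-th moment. -/
def FinMom (p : ℝ) (μ : Measure E) : Prop :=
  ∫⁻ x, ENNReal.ofReal (‖x‖ ^ p) ∂μ < ⊤

/-- `π` is a transference plan from `μ` to `ν`: its first and second marginals
are `μ` and `ν` respectively. -/
def IsPlan (π : Measure (E × E)) (μ ν : Measure E) : Prop :=
  π.map Prod.fst = μ ∧ π.map Prod.snd = ν

/-- Transportation cost `∫ |x - y|^p dπ(x,y)` of a plan `π`. -/
def Wcost (p : ℝ) (π : Measure (E × E)) : ℝ≥0∞ :=
  ∫⁻ z, ENNReal.ofReal (dist z.1 z.2 ^ p) ∂π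

/-- The Wasserstein distance `W_p(μ,ν) = (inf_π ∫ |x-y|^p dπ)^{1/p}`. -/
def Wp (p : ℝ) (μ ν : Measure E) : ℝ :=
  ((sInf (Wcost p '' {π | IsPlan π μ ν})) ^ (1 / p)).toReal

/-- The set of admissible values `a|μ-μ̃| + a|ν-ν̃| + b W_p(μ̃,ν̃)` over all
`μ̃, ν̃ ∈ M^p` with `|μ̃| = |ν̃|`. -/
def gwSet (a b p : ℝ) (μ ν : Measure E) : Set ℝ :=
  { r | ∃ μ' ν' : Measure E, IsFiniteMeasure μ' ∧ IsFiniteMeasure ν' ∧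
      FinMom p μ' ∧ FinMom p ν' ∧ μ' Set.univ = ν' Set.univ ∧
      r = a * tvDist μ μ' + a * tvDist ν ν' + b * Wp p μ' ν' }

/-- The generalized Wasserstein distance `W^{a,b}_p`. -/
def GW (a b p : ℝ) (μ ν : Measure E) : ℝ := sInf (gwSet a b p μ ν)

/-- The support of a measure: the set of points all of whose open neighbourhoods
have positive measure. -/
def msupp (μ : Measure E) : Set E := {x : E | ∀ U : Set E, IsOpen U → x ∈ U → μ U ≠ 0}

/-- Weak convergence of a sequence of measures: convergence of integrals of all
bounded continuous functions. -/
def WeakConv {F : Type*} [MeasurableSpace F] [TopologicalSpace F]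
    (μs : ℕ → Measure F) (μ : Measure F) : Prop :=
  ∀ f : F → ℝ, Continuous f → (∃ C : ℝ, ∀ x, |f x| ≤ C) →
    Tendsto (fun n => ∫ x, f x ∂(μs n)) atTop (𝓝 (∫ x, f x ∂μ))

/-- A family of measures is tight if for every `ε > 0` there is a compact set
whose complement has measure less than `ε` for all members of the family. -/
def Tight (F : Set (Measure E)) : Prop :=
  ∀ ε : ℝ, 0 < ε → ∃ K : Set E, IsCompact K ∧ ∀ μ ∈ F, μ Kᶜ < ENNReal.ofReal ε

end

noncomputable section

/-- `μ ∈ M_0^{ac}`: a finite measure, absolutely continuous with respect to the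
Lebesgue measure, with bounded support. -/
def M0ac {d : ℕ} (μ : MeasureTheory.Measure (Euc d)) : Prop :=
  MeasureTheory.IsFiniteMeasure μ ∧ μ ≪ MeasureTheory.volume ∧ Bornology.IsBounded (msupp μ)

/-- `Φ` is the flow of the vector field `v`: `Φ 0 = id` and
`∂_t Φ_t(x) = v(Φ_t(x))`. -/
def IsFlow {d : ℕ} (v : Euc d → Euc d) (Φ : ℝ → Euc d → Euc d) : Prop :=
  (∀ x, Φ 0 x = x) ∧ ∀ x t, HasDerivAt (fun s => Φ s x) (v (Φ t x)) t

end

section Aux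

open Set

/-- The complement of the support of a measure on `Euc d` is null. -/
lemma msupp_compl_null {d : ℕ} (μ : Measure (Euc d)) : μ (msupp μ)ᶜ = 0 := by
  have h : ∀ x : ((msupp μ)ᶜ : Set (Euc d)),
      ∃ U : Set (Euc d), IsOpen U ∧ (x : Euc d) ∈ U ∧ μ U = 0 := by
    rintro ⟨x, hx⟩
    simp only [msupp, Set.mem_compl_iff, Set.mem_setOf_eq] at hx
    push_neg at hx
    obtain ⟨U, hU, hxU, h0⟩ := hx
    exact ⟨U, hU, hxU, h0⟩
  choose U hUo hxU hU0 using h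
  obtain ⟨T, hTc, hT⟩ := TopologicalSpace.isOpen_iUnion_countable U hUo
  have hsub : (msupp μ)ᶜ ⊆ ⋃ i ∈ T, U i := by
    rw [hT]
    intro x hx
    exact Set.mem_iUnion.2 ⟨⟨x, hx⟩, hxU _⟩
  exact measure_mono_null hsub ((measure_biUnion_null_iff hTc).2 fun i _ => hU0 i)

/-- Grönwall estimate comparing the flows of two vector fields. -/
lemma flow_dist_le {d : ℕ} (v w : Euc d → Euc d) (L D : ℝ)
    (hLv : ∀ x y, ‖v x - v y‖ ≤ L * ‖x - y‖) (hD : ∀ x, ‖v x - w x‖ ≤ D)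
    (Φv Φw : ℝ → Euc d → Euc d) (hΦv : IsFlow v Φv) (hΦw : IsFlow w Φw)
    (t : ℝ) (ht : 0 ≤ t) (x y : Euc d) :
    dist (Φv t x) (Φw t y) ≤ gronwallBound (dist x y) L D t := by
  set f : ℝ → Euc d := fun s => Φv s x - Φw s y with hf
  have hderiv : ∀ s, HasDerivAt f (v (Φv s x) - w (Φw s y)) s := fun s =>
    (hΦv.2 x s).sub (hΦw.2 y s)
  have hcont : ContinuousOn f (Set.Icc 0 t) := fun s _ =>
    ((hderiv s).continuousAt).continuousWithinAt
  have h0 : ‖f 0‖ ≤ dist x y := by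
    simp only [hf, hΦv.1, hΦw.1]
    rw [dist_eq_norm]
  have hbound : ∀ s ∈ Set.Ico 0 t, ‖v (Φv s x) - w (Φw s y)‖ ≤ L * ‖f s‖ + D := by
    intro s _
    calc ‖v (Φv s x) - w (Φw s y)‖
        = ‖(v (Φv s x) - v (Φw s y)) + (v (Φw s y) - w (Φw s y))‖ := by
          rw [sub_add_sub_cancel]
      _ ≤ ‖v (Φv s x) - v (Φw s y)‖ + ‖v (Φw s y) - w (Φw s y)‖ := norm_add_le _ _
      _ ≤ L * ‖Φv s x - Φw s y‖ + D := add_le_add (hLv _ _) (hD _)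
      _ = L * ‖f s‖ + D := rfl
  have := norm_le_gronwallBound_of_norm_deriv_right_le hcont
    (fun s _ => (hderiv s).hasDerivWithinAt) h0 hbound t (Set.right_mem_Icc.2 ht)
  rw [sub_zero] at this
  rw [dist_eq_norm]
  exact this

end Aux

theorem wp_flow_flow_two_fields {d : ℕ} (hd : 1 ≤ d) (p : ℝ) (hp : 1 ≤ p)
    (v w : Euc d → Euc d) (L : ℝ) (hLpos : 0 < L)
    (hLv : ∀ x y, ‖v x - v y‖ ≤ L * ‖x - y‖) (hLw : ∀ x y, ‖w x - w y‖ ≤ L * ‖x - y‖)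
    (hbv : ∃ C : ℝ, ∀ x, ‖v x‖ ≤ C) (hbw : ∃ C : ℝ, ∀ x, ‖w x‖ ≤ C)
    (Φv Φw : ℝ → Euc d → Euc d) (hΦv : IsFlow v Φv) (hΦw : IsFlow w Φw)
    (μ ν : Measure (Euc d)) (hμ : M0ac μ) (hν : M0ac ν)
    (hm : μ Set.univ = ν Set.univ) (t : ℝ) (ht : 0 ≤ t) :
    Wp p (μ.map (Φv t)) (ν.map (Φw t)) ≤ Real.exp ((p + 1) / p * L * t) * Wp p μ ν
      + mass μ ^ (1 / p) * (Real.exp (L * t / p) * (Real.exp (L * t) - 1) / L)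
        * (⨆ x, ‖v x - w x‖) := by
  haveI : IsFiniteMeasure μ := hμ.1
  haveI : IsFiniteMeasure ν := hν.1
  have hp0 : 0 < p := lt_of_lt_of_le one_pos hp
  have hip : 0 < 1 / p := by positivity
  obtain ⟨Cv, hCv⟩ := hbv
  obtain ⟨Cw, hCw⟩ := hbw
  set D : ℝ := ⨆ x, ‖v x - w x‖ with hD
  have hbdd : BddAbove (Set.range fun x => ‖v x - w x‖) :=
    ⟨Cv + Cw, by rintro r ⟨x, rfl⟩; exact (norm_sub_le _ _).trans (add_le_add (hCv x) (hCw x))⟩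
  have hDle : ∀ x, ‖v x - w x‖ ≤ D := fun x => le_ciSup hbdd x
  have hD0 : 0 ≤ D := le_trans (norm_nonneg _) (hDle 0)
  set A : ℝ := Real.exp (L * t) with hA
  have hA1 : 1 ≤ A := Real.one_le_exp (by positivity)
  have hA0 : 0 ≤ A := by linarith
  set B : ℝ := D / L * (A - 1) with hB
  have hB0 : 0 ≤ B := mul_nonneg (div_nonneg hD0 hLpos.le) (by linarith)
  have key : ∀ x y : Euc d, dist (Φv t x) (Φw t y) ≤ A * dist x y + B := by
    intro x y
    have h2 := flow_dist_le v w L D hLv hDle Φv Φw hΦv hΦw t ht x y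
    rw [gronwallBound_of_K_ne_0 hLpos.ne'] at h2
    nlinarith [h2]
  have keyv : ∀ x y : Euc d, dist (Φv t x) (Φv t y) ≤ A * dist x y := by
    intro x y
    have h2 := flow_dist_le v v L 0 hLv (fun x => by simp) Φv Φv hΦv hΦv t ht x y
    rw [gronwallBound_of_K_ne_0 hLpos.ne'] at h2
    simp only [zero_div, zero_mul, add_zero] at h2
    nlinarith [h2]
  have keyw : ∀ x y : Euc d, dist (Φw t x) (Φw t y) ≤ A * dist x y := by
    intro x y
    have h2 := flow_dist_le w w L 0 hLw (fun x => by simp) Φw Φw hΦw hΦw t ht x y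
    rw [gronwallBound_of_K_ne_0 hLpos.ne'] at h2
    simp only [zero_div, zero_mul, add_zero] at h2
    nlinarith [h2]
  have hlipv : Continuous (Φv t) :=
    (LipschitzWith.of_dist_le_mul (K := Real.toNNReal A) (fun x y => by
      rw [Real.coe_toNNReal A hA0]; exact keyv x y)).continuous
  have hlipw : Continuous (Φw t) :=
    (LipschitzWith.of_dist_le_mul (K := Real.toNNReal A) (fun x y => by
      rw [Real.coe_toNNReal A hA0]; exact keyw x y)).continuous
  have mv : Measurable (Φv t) := hlipv.measurable
  have mw : Measurable (Φw t) := hlipw.measurable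
  have mcost : Measurable (fun z : Euc d × Euc d => ENNReal.ofReal (dist z.1 z.2 ^ p)) :=
    ((measurable_fst.dist measurable_snd).pow measurable_const).ennreal_ofReal
  by_cases hμ0 : μ Set.univ = 0
  · -- degenerate case: both measures are zero
    have hμz : μ = 0 := by simpa using hμ0
    have hνz : ν = 0 := by rw [hm] at hμ0; simpa using hμ0
    have hW0 : ∀ μ' ν' : Measure (Euc d), μ' = 0 → ν' = 0 → Wp p μ' ν' = 0 := by
      intro μ' ν' h1 h2
      have hmem : (0 : ℝ≥0∞) ∈ Wcost p '' {π | IsPlan π μ' ν'} := by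
        refine ⟨0, ?_, ?_⟩
        · constructor <;> simp [IsPlan, Measure.map_zero, h1, h2]
        · simp [Wcost]
      have hinf : sInf (Wcost p '' {π | IsPlan π μ' ν'}) = 0 :=
        le_antisymm (sInf_le hmem) zero_le
      rw [Wp, hinf, ENNReal.zero_rpow_of_pos hip]
      simp
  -- continue degenerate
    have l1 : Wp p (μ.map (Φv t)) (ν.map (Φw t)) = 0 :=
      hW0 _ _ (by rw [hμz]; simp) (by rw [hνz]; simp)
    have l2 : Wp p μ ν = 0 := hW0 _ _ hμz hνz
    have l3 : mass μ = 0 := by rw [mass, hμz]; simp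
    rw [l1, l2, l3, Real.zero_rpow (by positivity : (1:ℝ)/p ≠ 0)]
    simp
  · -- main case
    have hν0 : ν Set.univ ≠ 0 := by rwa [hm] at hμ0
    have hνtop : ν Set.univ ≠ ⊤ := measure_ne_top ν _
    have hμtop : μ Set.univ ≠ ⊤ := measure_ne_top μ _
    set S := Wcost p '' {π | IsPlan π μ ν} with hS
    set St := Wcost p '' {π | IsPlan π (μ.map (Φv t)) (ν.map (Φw t))} with hSt
    have hWpdef : Wp p μ ν = ((sInf S) ^ (1/p)).toReal := rfl
    have hWtdef : Wp p (μ.map (Φv t)) (ν.map (Φw t)) = ((sInf St) ^ (1/p)).toReal := rfl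
    -- the normalized product plan
    set π0 : Measure (Euc d × Euc d) := (ν Set.univ)⁻¹ • (μ.prod ν) with hπ0
    have hplan0 : IsPlan π0 μ ν := by
      constructor
      · rw [hπ0, Measure.map_smul, Measure.map_fst_prod, smul_smul,
          ENNReal.inv_mul_cancel hν0 hνtop, one_smul]
      · rw [hπ0, Measure.map_smul, Measure.map_snd_prod, hm, smul_smul,
          ENNReal.inv_mul_cancel hν0 hνtop, one_smul]
    -- finiteness of the cost of π0
    obtain ⟨Rμ, hRμ⟩ := hμ.2.2.subset_closedBall (0 : Euc d)
    obtain ⟨Rν, hRν⟩ := hν.2.2.subset_closedBall (0 : Euc d)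
    set R0 : ℝ := max (max Rμ Rν) 0 with hR0
    have hdistb : ∀ z : Euc d × Euc d, z ∈ (msupp μ) ×ˢ (msupp ν) →
        dist z.1 z.2 ≤ 2 * R0 := by
      intro z hz
      have h1 : dist z.1 (0 : Euc d) ≤ Rμ := Metric.mem_closedBall.1 (hRμ hz.1)
      have h2 : dist z.2 (0 : Euc d) ≤ Rν := Metric.mem_closedBall.1 (hRν hz.2)
      have hr1 : Rμ ≤ R0 := (le_max_left Rμ Rν).trans (le_max_left _ 0)
      have hr2 : Rν ≤ R0 := (le_max_right Rμ Rν).trans (le_max_left _ 0)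
      calc dist z.1 z.2 ≤ dist z.1 (0 : Euc d) + dist (0 : Euc d) z.2 := dist_triangle _ _ _
        _ = dist z.1 (0 : Euc d) + dist z.2 (0 : Euc d) := by rw [dist_comm (0 : Euc d)]
        _ ≤ R0 + R0 := add_le_add (h1.trans hr1) (h2.trans hr2)
        _ = 2 * R0 := by ring
    have hnull : (μ.prod ν) ((msupp μ ×ˢ msupp ν)ᶜ) = 0 := by
      have hsub : (msupp μ ×ˢ msupp ν)ᶜ ⊆
          ((msupp μ)ᶜ ×ˢ (Set.univ : Set (Euc d))) ∪
          ((Set.univ : Set (Euc d)) ×ˢ (msupp ν)ᶜ) := by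
        intro z hz
        simp only [Set.mem_compl_iff, Set.mem_prod, Set.mem_union, Set.mem_univ, and_true,
          true_and, not_and_or] at *
        tauto
      refine measure_mono_null hsub (le_antisymm ((measure_union_le _ _).trans ?_) zero_le)
      rw [Measure.prod_prod, Measure.prod_prod, msupp_compl_null, msupp_compl_null]
      simp
    have hae : ∀ᵐ z ∂(μ.prod ν), z ∈ (msupp μ) ×ˢ (msupp ν) := by
      rw [MeasureTheory.ae_iff]
      exact hnull
    have hcost0 : Wcost p π0 ≠ ⊤ := by
      have hb : ∫⁻ z, ENNReal.ofReal (dist z.1 z.2 ^ p) ∂(μ.prod ν) ≤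
          ENNReal.ofReal ((2 * R0) ^ p) * (μ.prod ν) Set.univ := by
        calc ∫⁻ z, ENNReal.ofReal (dist z.1 z.2 ^ p) ∂(μ.prod ν)
            ≤ ∫⁻ _, ENNReal.ofReal ((2 * R0) ^ p) ∂(μ.prod ν) := by
              refine lintegral_mono_ae (hae.mono fun z hz => ?_)
              exact ENNReal.ofReal_le_ofReal
                (Real.rpow_le_rpow dist_nonneg (hdistb z hz) hp0.le)
          _ = ENNReal.ofReal ((2 * R0) ^ p) * (μ.prod ν) Set.univ := lintegral_const _
      rw [Wcost, hπ0, lintegral_smul_measure]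
      exact ENNReal.mul_ne_top (ENNReal.inv_ne_top.2 hν0)
        (ne_top_of_le_ne_top
          (ENNReal.mul_ne_top ENNReal.ofReal_ne_top (measure_ne_top _ _)) hb)
    have hmem0 : Wcost p π0 ∈ S := ⟨π0, hplan0, rfl⟩
    have hSfin : sInf S ≠ ⊤ := ne_top_of_le_ne_top hcost0 (sInf_le hmem0)
    have hSne : S.Nonempty := ⟨_, hmem0⟩
    haveI : Nonempty S := hSne.to_subtype
    set A' : ℝ≥0∞ := ENNReal.ofReal A with hA'
    set B' : ℝ≥0∞ := ENNReal.ofReal B with hB'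
    set m : ℝ≥0∞ := μ Set.univ with hmm
    have hA'0 : A' ≠ 0 := (ENNReal.ofReal_pos.2 (by linarith)).ne'
    have hA'top : A' ≠ ⊤ := ENNReal.ofReal_ne_top
    -- main estimate for an arbitrary plan
    have claim2 : ∀ π : Measure (Euc d × Euc d), IsPlan π μ ν →
        (sInf St) ^ (1/p) ≤ A' * (Wcost p π) ^ (1/p) + B' * m ^ (1/p) := by
      intro π hπ
      set πt := π.map (Prod.map (Φv t) (Φw t)) with hπt
      have mmap : Measurable (Prod.map (Φv t) (Φw t)) :=
        (mv.comp measurable_fst).prodMk (mw.comp measurable_snd)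
      have hplan_t : IsPlan πt (μ.map (Φv t)) (ν.map (Φw t)) := by
        constructor
        · rw [hπt, Measure.map_map measurable_fst mmap]
          have h : (Prod.fst ∘ Prod.map (Φv t) (Φw t)) = (Φv t) ∘ Prod.fst := rfl
          rw [h, ← Measure.map_map mv measurable_fst, hπ.1]
        · rw [hπt, Measure.map_map measurable_snd mmap]
          have h : (Prod.snd ∘ Prod.map (Φv t) (Φw t)) = (Φw t) ∘ Prod.snd := rfl
          rw [h, ← Measure.map_map mw measurable_snd, hπ.2]
      have hle1 : sInf St ≤ Wcost p πt := sInf_le ⟨πt, hplan_t, rfl⟩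
      have heq : Wcost p πt = ∫⁻ z, ENNReal.ofReal (dist (Φv t z.1) (Φw t z.2) ^ p) ∂π := by
        rw [Wcost, hπt, lintegral_map mcost mmap]
        rfl
      set F : Euc d × Euc d → ℝ≥0∞ := fun z => ENNReal.ofReal (A * dist z.1 z.2) with hF
      set G : Euc d × Euc d → ℝ≥0∞ := fun z => ENNReal.ofReal B with hG
      have hFm : Measurable F :=
        (measurable_const.mul (measurable_fst.dist measurable_snd)).ennreal_ofReal
      have hGm : Measurable G := measurable_const
      have hpt : ∀ z : Euc d × Euc d,
          ENNReal.ofReal (dist (Φv t z.1) (Φw t z.2) ^ p) ≤ (F z + G z) ^ p := by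
        intro z
        rw [← ENNReal.ofReal_rpow_of_nonneg dist_nonneg hp0.le]
        refine ENNReal.rpow_le_rpow ?_ hp0.le
        calc ENNReal.ofReal (dist (Φv t z.1) (Φw t z.2))
            ≤ ENNReal.ofReal (A * dist z.1 z.2 + B) :=
              ENNReal.ofReal_le_ofReal (key z.1 z.2)
          _ = F z + G z := ENNReal.ofReal_add (mul_nonneg hA0 dist_nonneg) hB0
      have hint1 : Wcost p πt ≤ ∫⁻ z, (F z + G z) ^ p ∂π := by
        rw [heq]; exact lintegral_mono hpt
      have hLp := ENNReal.lintegral_Lp_add_le (μ := π) hFm.aemeasurable hGm.aemeasurable hp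
      have hFint : (∫⁻ z, F z ^ p ∂π) = A' ^ p * Wcost p π := by
        have hptF : ∀ z : Euc d × Euc d,
            F z ^ p = A' ^ p * ENNReal.ofReal (dist z.1 z.2 ^ p) := by
          intro z
          simp only [hF]
          rw [ENNReal.ofReal_mul hA0, ENNReal.mul_rpow_of_nonneg _ _ hp0.le,
            ENNReal.ofReal_rpow_of_nonneg dist_nonneg hp0.le]
        simp_rw [hptF]
        rw [lintegral_const_mul _ mcost, Wcost]
      have hπuniv : π Set.univ = m := by
        rw [hmm, ← hπ.1, Measure.map_apply measurable_fst MeasurableSet.univ]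
        rfl
      have hGint : (∫⁻ z, G z ^ p ∂π) = B' ^ p * m := by
        simp only [hG]
        rw [lintegral_const, hπuniv]
      have hrp : ∀ X : ℝ≥0∞, ∀ C : ℝ≥0∞, ((C ^ p) * X) ^ (1/p) = C * X ^ (1/p) := by
        intro X C
        rw [ENNReal.mul_rpow_of_nonneg _ _ hip.le, ← ENNReal.rpow_mul,
          mul_one_div_cancel hp0.ne', ENNReal.rpow_one]
      calc (sInf St) ^ (1/p) ≤ (Wcost p πt) ^ (1/p) := ENNReal.rpow_le_rpow hle1 hip.le
        _ ≤ (∫⁻ z, (F z + G z) ^ p ∂π) ^ (1/p) := ENNReal.rpow_le_rpow hint1 hip.le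
        _ ≤ (∫⁻ z, F z ^ p ∂π) ^ (1/p) + (∫⁻ z, G z ^ p ∂π) ^ (1/p) := hLp
        _ = A' * (Wcost p π) ^ (1/p) + B' * m ^ (1/p) := by
            rw [hFint, hGint, hrp, hrp]
    -- pass to the infimum
    have h3 : (sInf St) ^ (1/p) ≤ A' * (sInf S) ^ (1/p) + B' * m ^ (1/p) := by
      have h1 : (sInf St) ^ (1/p) ≤
          ⨅ c : S, (A' * (c : ℝ≥0∞) ^ (1/p) + B' * m ^ (1/p)) := by
        refine le_iInf fun c => ?_
        obtain ⟨π, hπ, hc⟩ := c.2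
        rw [← hc]
        exact claim2 π hπ
      refine h1.trans (le_of_eq ?_)
      rw [← ENNReal.iInf_add]
      congr 1
      rw [← ENNReal.mul_iInf_of_ne hA'0 hA'top]
      congr 1
      have hmapi := (ENNReal.orderIsoRpow (1/p) hip).map_iInf (fun c : S => (c : ℝ≥0∞))
      simp only [ENNReal.orderIsoRpow_apply] at hmapi
      rw [sInf_eq_iInf']
      exact hmapi.symm
    -- take toReal
    have hterm1 : A' * (sInf S) ^ (1/p) ≠ ⊤ :=
      ENNReal.mul_ne_top hA'top (ENNReal.rpow_ne_top_of_nonneg hip.le hSfin)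
    have hterm2 : B' * m ^ (1/p) ≠ ⊤ :=
      ENNReal.mul_ne_top ENNReal.ofReal_ne_top (ENNReal.rpow_ne_top_of_nonneg hip.le hμtop)
    have hfin : A' * (sInf S) ^ (1/p) + B' * m ^ (1/p) ≠ ⊤ :=
      ENNReal.add_ne_top.2 ⟨hterm1, hterm2⟩
    have hreal : Wp p (μ.map (Φv t)) (ν.map (Φw t)) ≤ A * Wp p μ ν + B * (mass μ) ^ (1/p) := by
      rw [hWtdef, hWpdef]
      calc ((sInf St) ^ (1/p)).toReal
          ≤ (A' * (sInf S) ^ (1/p) + B' * m ^ (1/p)).toReal := ENNReal.toReal_mono hfin h3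
        _ = A * ((sInf S) ^ (1/p)).toReal + B * (mass μ) ^ (1/p) := by
            rw [ENNReal.toReal_add hterm1 hterm2, ENNReal.toReal_mul, ENNReal.toReal_mul,
              hA', hB', ENNReal.toReal_ofReal hA0, ENNReal.toReal_ofReal hB0,
              ← ENNReal.toReal_rpow, ← ENNReal.toReal_rpow]
            rfl
    have hW0' : 0 ≤ Wp p μ ν := ENNReal.toReal_nonneg
    have hmass0 : 0 ≤ mass μ ^ (1/p) := Real.rpow_nonneg ENNReal.toReal_nonneg _
    refine hreal.trans ?_
    have e1 : A * Wp p μ ν ≤ Real.exp ((p + 1) / p * L * t) * Wp p μ ν := by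
      refine mul_le_mul_of_nonneg_right ?_ hW0'
      rw [hA]
      refine Real.exp_le_exp.2 ?_
      have h1p : 1 ≤ (p + 1) / p := by rw [le_div_iff₀ hp0]; linarith
      nlinarith [mul_nonneg hLpos.le ht]
    have e2 : B * mass μ ^ (1/p) ≤
        mass μ ^ (1/p) * (Real.exp (L * t / p) * (Real.exp (L * t) - 1) / L) * D := by
      have hexp1 : 1 ≤ Real.exp (L * t / p) := Real.one_le_exp (by positivity)
      have hstep : (A - 1) ≤ Real.exp (L * t / p) * (A - 1) :=
        le_mul_of_one_le_left (by linarith) hexp1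
      have key2 : (A - 1) / L ≤ Real.exp (L * t / p) * (A - 1) / L :=
        (div_le_div_iff_of_pos_right hLpos).2 hstep
      calc B * mass μ ^ (1/p) = mass μ ^ (1/p) * ((A - 1) / L) * D := by rw [hB]; ring
        _ ≤ mass μ ^ (1/p) * (Real.exp (L * t / p) * (A - 1) / L) * D := by
            refine mul_le_mul_of_nonneg_right ?_ hD0
            exact mul_le_mul_of_nonneg_left key2 hmass0
        _ = mass μ ^ (1/p) * (Real.exp (L * t / p) * (Real.exp (L * t) - 1) / L) * D := by
            rw [hA]
    linarith [e1, e2]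
end

section
/- Let v : ℝ^d → ℝ^d be a bounded Lipschitz vector field with Lipschitz constant L, and let μ, ν ∈ M_0^{ac}. Then for every t ≥ 0, W^{a,b}_p(Φ^v_t#μ, Φ^v_t#ν) ≤ e^{((p+1)/p)·L·t} · W^{a,b}_p(μ, ν). -/
open MeasureTheory ENNReal Filter Topology

section AuxLemmas
open MeasureTheory ENNReal

lemma my_le_sub_add {α : Type*} [MeasurableSpace α] (μ ν : Measure α)
    [IsFiniteMeasure μ] [IsFiniteMeasure ν] : μ ≤ (μ - ν) + ν := by
  obtain ⟨s, hs, hsle, hcle⟩ := hahn_decomposition (μ := μ) (ν := ν)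
  rw [Measure.le_iff]
  intro t ht
  rw [← measure_inter_add_diff t hs, ← measure_inter_add_diff (μ := (μ - ν) + ν) t hs]
  apply add_le_add
  · have h2 : ν.restrict s ≤ μ.restrict s := by
      rw [Measure.le_iff]; intro u hu
      rw [Measure.restrict_apply hu, Measure.restrict_apply hu]
      exact hsle _ (hu.inter hs) Set.inter_subset_right
    have h1 : (μ - ν) (t ∩ s) = μ (t ∩ s) - ν (t ∩ s) := by
      have e1 : (μ - ν) (t ∩ s) = (μ - ν).restrict s (t ∩ s) := by
        rw [Measure.restrict_apply (ht.inter hs), Set.inter_assoc, Set.inter_self]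
      rw [e1, Measure.restrict_sub_eq_restrict_sub_restrict hs,
        Measure.sub_apply (ht.inter hs) h2, Measure.restrict_apply (ht.inter hs),
        Measure.restrict_apply (ht.inter hs), Set.inter_assoc, Set.inter_self]
    rw [Measure.add_apply, h1, tsub_add_cancel_of_le (hsle _ (ht.inter hs) Set.inter_subset_right)]
  · calc μ (t \ s) ≤ ν (t \ s) := hcle _ (ht.diff hs) (Set.diff_subset_compl t s)
      _ ≤ ((μ - ν) + ν) (t \ s) := by
          rw [Measure.add_apply]; exact le_add_self

lemma sub_univ_map_le {α β : Type*} [MeasurableSpace α] [MeasurableSpace β] {f : α → β}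
    (hf : Measurable f) (μ ν : Measure α) [IsFiniteMeasure μ] [IsFiniteMeasure ν] :
    (μ.map f - ν.map f) Set.univ ≤ (μ - ν) Set.univ := by
  have h1 : μ.map f - ν.map f ≤ (μ - ν).map f := by
    apply Measure.sub_le_of_le_add
    rw [← Measure.map_add _ _ hf]
    exact Measure.map_mono (my_le_sub_add μ ν) hf
  calc (μ.map f - ν.map f) Set.univ ≤ (μ - ν).map f Set.univ := Measure.le_iff'.1 h1 _
    _ = (μ - ν) Set.univ := by rw [Measure.map_apply hf MeasurableSet.univ, Set.preimage_univ]

lemma tvDist_map_le {α β : Type*} [MeasurableSpace α] [MeasurableSpace β] {f : α → β}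
    (hf : Measurable f) (μ ν : Measure α) [IsFiniteMeasure μ] [IsFiniteMeasure ν] :
    tvDist (μ.map f) (ν.map f) ≤ tvDist μ ν := by
  unfold tvDist
  apply ENNReal.toReal_mono
  · exact ENNReal.add_ne_top.2
      ⟨((Measure.le_iff'.1 Measure.sub_le _).trans_lt (measure_lt_top μ _)).ne,
       ((Measure.le_iff'.1 Measure.sub_le _).trans_lt (measure_lt_top ν _)).ne⟩
  · exact add_le_add (sub_univ_map_le hf μ ν) (sub_univ_map_le hf ν μ)

lemma tvDist_nonneg {α : Type*} [MeasurableSpace α] (μ ν : MeasureTheory.Measure α) :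
    0 ≤ tvDist μ ν := by
  unfold tvDist; exact ENNReal.toReal_nonneg

lemma Wp_nonneg {E : Type*} [NormedAddCommGroup E] [MeasurableSpace E]
    (p : ℝ) (μ ν : Measure E) : 0 ≤ Wp p μ ν := by
  unfold Wp; exact ENNReal.toReal_nonneg

lemma flow_dist_le_s15 {d : ℕ} {v : Euc d → Euc d} {L : ℝ} (hL : ∀ x y, ‖v x - v y‖ ≤ L * ‖x - y‖)
    {Φ : ℝ → Euc d → Euc d} (hΦ : IsFlow v Φ) {t : ℝ} (ht : 0 ≤ t) (x y : Euc d) :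
    dist (Φ t x) (Φ t y) ≤ Real.exp (L * t) * dist x y := by
  have hf : ∀ s, HasDerivAt (fun s => Φ s x - Φ s y) (v (Φ s x) - v (Φ s y)) s :=
    fun s => (hΦ.2 x s).sub (hΦ.2 y s)
  have hcont : ContinuousOn (fun s => Φ s x - Φ s y) (Set.Icc 0 t) :=
    (continuous_iff_continuousAt.2 fun s => (hf s).continuousAt).continuousOn
  have key := norm_le_gronwallBound_of_norm_deriv_right_le (δ := ‖x - y‖) (K := L) (ε := 0)
    hcont (fun s _ => (hf s).hasDerivWithinAt)
    (by rw [hΦ.1 x, hΦ.1 y])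
    (fun s _ => by simpa using hL (Φ s x) (Φ s y)) t (Set.right_mem_Icc.2 ht)
  rw [gronwallBound_ε0, sub_zero] at key
  rw [dist_eq_norm, dist_eq_norm, mul_comm]
  exact key

lemma flow_move_le {d : ℕ} {v : Euc d → Euc d} {C : ℝ} (hC : ∀ x, ‖v x‖ ≤ C)
    {Φ : ℝ → Euc d → Euc d} (hΦ : IsFlow v Φ) {t : ℝ} (ht : 0 ≤ t) (x : Euc d) :
    ‖Φ t x - x‖ ≤ C * t := by
  have hf : ∀ s, HasDerivAt (fun s => Φ s x - x) (v (Φ s x)) s :=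
    fun s => (hΦ.2 x s).sub_const x
  have hcont : ContinuousOn (fun s => Φ s x - x) (Set.Icc 0 t) :=
    (continuous_iff_continuousAt.2 fun s => (hf s).continuousAt).continuousOn
  have key := norm_le_gronwallBound_of_norm_deriv_right_le (δ := 0) (K := 0) (ε := C)
    hcont (fun s _ => (hf s).hasDerivWithinAt)
    (by rw [hΦ.1 x]; simp)
    (fun s _ => by simpa using hC (Φ s x)) t (Set.right_mem_Icc.2 ht)
  rw [gronwallBound_K0, sub_zero] at key
  simpa using key

lemma rpow_add_le2 {u w p : ℝ} (hu : 0 ≤ u) (hw : 0 ≤ w) (hp : 0 ≤ p) :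
    (u + w) ^ p ≤ 2 ^ p * (u ^ p + w ^ p) := by
  have h1 : u + w ≤ 2 * max u w := by
    rw [two_mul]; exact add_le_add (le_max_left u w) (le_max_right u w)
  calc (u + w) ^ p ≤ (2 * max u w) ^ p :=
        Real.rpow_le_rpow (by positivity) h1 hp
    _ = 2 ^ p * (max u w) ^ p := Real.mul_rpow (by norm_num) (le_max_of_le_left hu)
    _ ≤ 2 ^ p * (u ^ p + w ^ p) := by
        apply mul_le_mul_of_nonneg_left _ (by positivity)
        rcases le_total u w with h | h
        · rw [max_eq_right h]; nlinarith [Real.rpow_nonneg hu p]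
        · rw [max_eq_left h]; nlinarith [Real.rpow_nonneg hw p]

section EucLemmas
variable {d : ℕ} {p : ℝ}

lemma meas_normp (hp : 0 ≤ p) : Measurable fun x : Euc d => ENNReal.ofReal (‖x‖ ^ p) :=
  (continuous_norm.rpow_const fun _ => Or.inr hp).measurable.ennreal_ofReal

lemma meas_costp (hp : 0 ≤ p) :
    Measurable fun z : Euc d × Euc d => ENNReal.ofReal (dist z.1 z.2 ^ p) :=
  (((continuous_fst.dist continuous_snd).rpow_const
    fun _ => Or.inr hp).measurable).ennreal_ofReal

lemma finMom_map (hp : 0 ≤ p) {f : Euc d → Euc d} (hf : Measurable f)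
    {D : ℝ} (hD : 0 ≤ D) (hfD : ∀ x, ‖f x‖ ≤ ‖x‖ + D)
    (μ : Measure (Euc d)) [IsFiniteMeasure μ] (hμ : FinMom p μ) : FinMom p (μ.map f) := by
  unfold FinMom at *
  rw [lintegral_map (meas_normp hp) hf]
  have hb : ∀ x : Euc d, ENNReal.ofReal (‖f x‖ ^ p) ≤
      ENNReal.ofReal (2 ^ p) * (ENNReal.ofReal (‖x‖ ^ p) + ENNReal.ofReal (D ^ p)) := by
    intro x
    rw [← ENNReal.ofReal_add (by positivity) (by positivity),
      ← ENNReal.ofReal_mul (by positivity)]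
    apply ENNReal.ofReal_le_ofReal
    calc ‖f x‖ ^ p ≤ (‖x‖ + D) ^ p := Real.rpow_le_rpow (norm_nonneg _) (hfD x) hp
      _ ≤ 2 ^ p * (‖x‖ ^ p + D ^ p) := rpow_add_le2 (norm_nonneg _) hD hp
  calc ∫⁻ x, ENNReal.ofReal (‖f x‖ ^ p) ∂μ
      ≤ ∫⁻ x, ENNReal.ofReal (2 ^ p) * (ENNReal.ofReal (‖x‖ ^ p) + ENNReal.ofReal (D ^ p)) ∂μ :=
        lintegral_mono hb
    _ = ENNReal.ofReal (2 ^ p) *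
        ((∫⁻ x, ENNReal.ofReal (‖x‖ ^ p) ∂μ) + ENNReal.ofReal (D ^ p) * μ Set.univ) := by
        rw [lintegral_const_mul' _ _ ENNReal.ofReal_ne_top,
          lintegral_add_right _ measurable_const, lintegral_const]
    _ < ⊤ := by
        apply ENNReal.mul_lt_top ENNReal.ofReal_lt_top
        exact ENNReal.add_lt_top.2
          ⟨hμ, ENNReal.mul_lt_top ENNReal.ofReal_lt_top (measure_lt_top μ _)⟩

lemma exists_plan (hp : 0 ≤ p) (μ ν : Measure (Euc d))
    [IsFiniteMeasure μ] [IsFiniteMeasure ν] (hμ : FinMom p μ) (hν : FinMom p ν)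
    (hmass : μ Set.univ = ν Set.univ) :
    ∃ π : Measure (Euc d × Euc d), IsPlan π μ ν ∧ Wcost p π < ⊤ := by
  by_cases hm : μ Set.univ = 0
  · have h1 : μ = 0 := Measure.measure_univ_eq_zero.1 hm
    have h2 : ν = 0 := Measure.measure_univ_eq_zero.1 (hmass ▸ hm)
    refine ⟨0, ⟨?_, ?_⟩, ?_⟩ <;> simp [h1, h2, Wcost]
  · set m := μ Set.univ with hmdef
    refine ⟨m⁻¹ • (μ.prod ν), ⟨?_, ?_⟩, ?_⟩
    · rw [Measure.map_smul, Measure.map_fst_prod, ← hmass, smul_smul,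
        ENNReal.inv_mul_cancel hm (measure_ne_top μ _), one_smul]
    · rw [Measure.map_smul, Measure.map_snd_prod, smul_smul,
        ENNReal.inv_mul_cancel hm (measure_ne_top μ _), one_smul]
    · unfold Wcost
      rw [lintegral_smul_measure]
      have hb : ∀ z : Euc d × Euc d, ENNReal.ofReal (dist z.1 z.2 ^ p) ≤
          ENNReal.ofReal (2 ^ p) * (ENNReal.ofReal (‖z.1‖ ^ p) + ENNReal.ofReal (‖z.2‖ ^ p)) := by
        intro z
        rw [← ENNReal.ofReal_add (by positivity) (by positivity),
          ← ENNReal.ofReal_mul (by positivity)]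
        apply ENNReal.ofReal_le_ofReal
        calc dist z.1 z.2 ^ p ≤ (‖z.1‖ + ‖z.2‖) ^ p :=
              Real.rpow_le_rpow dist_nonneg (by rw [dist_eq_norm]; exact norm_sub_le _ _) hp
          _ ≤ 2 ^ p * (‖z.1‖ ^ p + ‖z.2‖ ^ p) :=
              rpow_add_le2 (norm_nonneg _) (norm_nonneg _) hp
      have hfin : ∫⁻ z, ENNReal.ofReal (2 ^ p) *
          (ENNReal.ofReal (‖z.1‖ ^ p) + ENNReal.ofReal (‖z.2‖ ^ p)) ∂(μ.prod ν) < ⊤ := by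
        rw [lintegral_const_mul' _ _ ENNReal.ofReal_ne_top]
        apply ENNReal.mul_lt_top ENNReal.ofReal_lt_top
        rw [lintegral_add_left (show Measurable fun z : Euc d × Euc d =>
          ENNReal.ofReal (‖z.1‖ ^ p) from (meas_normp hp).comp measurable_fst)]
        apply ENNReal.add_lt_top.2
        constructor
        · have he : ∫⁻ z : Euc d × Euc d, ENNReal.ofReal (‖z.1‖ ^ p) ∂(μ.prod ν)
              = ∫⁻ x, ENNReal.ofReal (‖x‖ ^ p) * ν Set.univ ∂μ := by
            rw [lintegral_prod _ ((show Measurable fun z : Euc d × Euc d =>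
              ENNReal.ofReal (‖z.1‖ ^ p) from (meas_normp hp).comp measurable_fst).aemeasurable)]
            simp [lintegral_const]
          rw [he, lintegral_mul_const' _ _ (measure_ne_top ν _)]
          exact ENNReal.mul_lt_top hμ (measure_lt_top ν _)
        · have he : ∫⁻ z : Euc d × Euc d, ENNReal.ofReal (‖z.2‖ ^ p) ∂(μ.prod ν)
              = μ Set.univ * ∫⁻ y, ENNReal.ofReal (‖y‖ ^ p) ∂ν := by
            rw [lintegral_prod _ ((show Measurable fun z : Euc d × Euc d =>
              ENNReal.ofReal (‖z.2‖ ^ p) from (meas_normp hp).comp measurable_snd).aemeasurable)]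
            simp [lintegral_const, mul_comm]
          rw [he]
          exact ENNReal.mul_lt_top (measure_lt_top μ _) hν
      exact ENNReal.mul_lt_top (by simp [ENNReal.inv_lt_top, pos_iff_ne_zero, hm])
        (lt_of_le_of_lt (lintegral_mono hb) hfin)

lemma wp_map_le (hp : 1 ≤ p) {f : Euc d → Euc d} (hf : Measurable f)
    {K : ℝ} (hK : 0 < K) (hfK : ∀ x y, dist (f x) (f y) ≤ K * dist x y)
    (μ ν : Measure (Euc d)) [IsFiniteMeasure μ] [IsFiniteMeasure ν]
    (hμ : FinMom p μ) (hν : FinMom p ν) (hmass : μ Set.univ = ν Set.univ) :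
    Wp p (μ.map f) (ν.map f) ≤ K * Wp p μ ν := by
  have hp0 : 0 < p := lt_of_lt_of_le one_pos hp
  set c : ℝ≥0∞ := ENNReal.ofReal (K ^ p) with hc
  have hc0 : c ≠ 0 := by
    simp only [hc, ne_eq, ENNReal.ofReal_eq_zero, not_le]
    exact Real.rpow_pos_of_pos hK p
  have hct : c ≠ ⊤ := ENNReal.ofReal_ne_top
  set B := sInf (Wcost p '' {π | IsPlan π μ ν}) with hB
  set A := sInf (Wcost p '' {π | IsPlan π (μ.map f) (ν.map f)}) with hA
  have hpush : ∀ π : Measure (Euc d × Euc d), IsPlan π μ ν →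
      ∃ π', IsPlan π' (μ.map f) (ν.map f) ∧ Wcost p π' ≤ c * Wcost p π := by
    intro π hπ
    have hg : Measurable fun z : Euc d × Euc d => (f z.1, f z.2) :=
      (hf.comp measurable_fst).prodMk (hf.comp measurable_snd)
    refine ⟨π.map fun z => (f z.1, f z.2), ⟨?_, ?_⟩, ?_⟩
    · rw [Measure.map_map measurable_fst hg]
      have he : (Prod.fst ∘ fun z : Euc d × Euc d => (f z.1, f z.2)) = f ∘ Prod.fst := rfl
      rw [he, ← Measure.map_map hf measurable_fst, hπ.1]
    · rw [Measure.map_map measurable_snd hg]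
      have he : (Prod.snd ∘ fun z : Euc d × Euc d => (f z.1, f z.2)) = f ∘ Prod.snd := rfl
      rw [he, ← Measure.map_map hf measurable_snd, hπ.2]
    · unfold Wcost
      rw [lintegral_map (meas_costp hp0.le) hg]
      have hb : ∀ z : Euc d × Euc d, ENNReal.ofReal (dist (f z.1) (f z.2) ^ p) ≤
          c * ENNReal.ofReal (dist z.1 z.2 ^ p) := by
        intro z
        rw [hc, ← ENNReal.ofReal_mul (by positivity)]
        apply ENNReal.ofReal_le_ofReal
        calc dist (f z.1) (f z.2) ^ p ≤ (K * dist z.1 z.2) ^ p :=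
              Real.rpow_le_rpow dist_nonneg (hfK _ _) hp0.le
          _ = K ^ p * dist z.1 z.2 ^ p := Real.mul_rpow hK.le dist_nonneg
      calc ∫⁻ z, ENNReal.ofReal (dist (f z.1) (f z.2) ^ p) ∂π
          ≤ ∫⁻ z, c * ENNReal.ofReal (dist z.1 z.2 ^ p) ∂π := lintegral_mono hb
        _ = c * ∫⁻ z, ENNReal.ofReal (dist z.1 z.2 ^ p) ∂π := lintegral_const_mul' _ _ hct
  have hAB : A ≤ c * B := by
    have h1 : ∀ s ∈ Wcost p '' {π | IsPlan π μ ν}, A ≤ c * s := by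
      rintro s ⟨π, hπ, rfl⟩
      obtain ⟨π', hπ', hle⟩ := hpush π hπ
      exact le_trans (sInf_le ⟨π', hπ', rfl⟩) hle
    have h2 : A / c ≤ B := by
      apply le_sInf
      intro s hs
      rw [ENNReal.div_le_iff_le_mul (Or.inl hc0) (Or.inl hct), mul_comm]
      exact h1 s hs
    calc A = A / c * c := (ENNReal.div_mul_cancel hc0 hct).symm
      _ ≤ B * c := mul_le_mul_left h2 c
      _ = c * B := mul_comm _ _
  obtain ⟨π₀, hπ₀, hπ₀fin⟩ := exists_plan hp0.le μ ν hμ hν hmass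
  have hBlt : B < ⊤ := lt_of_le_of_lt (sInf_le ⟨π₀, hπ₀, rfl⟩) hπ₀fin
  unfold Wp
  rw [← hA, ← hB]
  have h3 : A ^ (1 / p) ≤ ENNReal.ofReal K * B ^ (1 / p) := by
    calc A ^ (1/p) ≤ (c * B) ^ (1/p) := ENNReal.rpow_le_rpow hAB (by positivity)
      _ = c ^ (1/p) * B ^ (1/p) := ENNReal.mul_rpow_of_nonneg _ _ (by positivity)
      _ = ENNReal.ofReal K * B ^ (1/p) := by
          rw [hc, ENNReal.ofReal_rpow_of_pos (Real.rpow_pos_of_pos hK p),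
            ← Real.rpow_mul hK.le, mul_one_div, div_self hp0.ne', Real.rpow_one]
  have hBne : B ^ (1/p) ≠ ⊤ := (ENNReal.rpow_lt_top_of_nonneg (by positivity) hBlt.ne).ne
  calc (A ^ (1/p)).toReal ≤ (ENNReal.ofReal K * B ^ (1/p)).toReal :=
        ENNReal.toReal_mono (ENNReal.mul_ne_top ENNReal.ofReal_ne_top hBne) h3
    _ = K * (B ^ (1/p)).toReal := by
        rw [ENNReal.toReal_mul, ENNReal.toReal_ofReal hK.le]

end EucLemmas
end AuxLemmas

theorem gw_flow_flow {d : ℕ} (hd : 1 ≤ d) (a b p : ℝ) (hp : 1 ≤ p) (ha : 0 < a) (hb : 0 < b)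
    (v : Euc d → Euc d) (L : ℝ) (hL : ∀ x y, ‖v x - v y‖ ≤ L * ‖x - y‖)
    (hbdd : ∃ C : ℝ, ∀ x, ‖v x‖ ≤ C)
    (Φ : ℝ → Euc d → Euc d) (hΦ : IsFlow v Φ)
    (μ ν : Measure (Euc d)) (hμ : M0ac μ) (hν : M0ac ν) (t : ℝ) (ht : 0 ≤ t) :
    GW a b p (μ.map (Φ t)) (ν.map (Φ t)) ≤ Real.exp ((p + 1) / p * L * t) * GW a b p μ ν := by
  obtain ⟨C, hC⟩ := hbdd
  have hp0 : 0 < p := lt_of_lt_of_le one_pos hp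
  have hC0 : 0 ≤ C := (norm_nonneg (v 0)).trans (hC 0)
  -- L is nonnegative
  have hL0 : 0 ≤ L := by
    set y : Euc d := EuclideanSpace.single ⟨0, hd⟩ (1 : ℝ) with hy
    have hy0 : y ≠ 0 := by
      intro h
      have : y ⟨0, hd⟩ = (1 : ℝ) := by simp [hy]
      rw [h] at this
      simp at this
    have hn : 0 < ‖(0 : Euc d) - y‖ := by
      rw [zero_sub, norm_neg]
      exact norm_pos_iff.2 hy0
    have h1 : 0 ≤ L * ‖(0 : Euc d) - y‖ := (norm_nonneg _).trans (hL 0 y)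
    nlinarith
  set K := Real.exp (L * t) with hKdef
  have hK0 : 0 < K := Real.exp_pos _
  have hK1 : 1 ≤ K := Real.one_le_exp (by positivity)
  have hdist : ∀ x y, dist (Φ t x) (Φ t y) ≤ K * dist x y := flow_dist_le_s15 hL hΦ ht
  have hmeas : Measurable (Φ t) := by
    have hlip : LipschitzWith K.toNNReal (Φ t) := by
      apply LipschitzWith.of_dist_le_mul
      intro x y
      rw [Real.coe_toNNReal K hK0.le]
      exact hdist x y
    exact hlip.continuous.measurable
  have hCt : 0 ≤ C * t := mul_nonneg hC0 ht
  have hfD : ∀ x, ‖Φ t x‖ ≤ ‖x‖ + C * t := by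
    intro x
    calc ‖Φ t x‖ = ‖(Φ t x - x) + x‖ := by rw [sub_add_cancel]
      _ ≤ ‖Φ t x - x‖ + ‖x‖ := norm_add_le _ _
      _ ≤ C * t + ‖x‖ := add_le_add_left (flow_move_le hC hΦ ht x) _
      _ = ‖x‖ + C * t := add_comm _ _
  set Ec := Real.exp ((p + 1) / p * L * t) with hEc
  have hE0 : 0 < Ec := Real.exp_pos _
  have hKE : K ≤ Ec := by
    apply Real.exp_le_exp.2
    have h1 : (1 : ℝ) ≤ (p + 1) / p := by
      rw [le_div_iff₀ hp0]
      linarith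
    nlinarith [mul_nonneg hL0 ht]
  haveI hμfin : IsFiniteMeasure μ := hμ.1
  haveI hνfin : IsFiniteMeasure ν := hν.1
  -- all elements of gwSet are nonnegative
  have hlb : ∀ (μ₁ ν₁ : Measure (Euc d)), ∀ r ∈ gwSet a b p μ₁ ν₁, 0 ≤ r := by
    rintro μ₁ ν₁ r ⟨μ', ν', _, _, _, _, _, rfl⟩
    have h1 := tvDist_nonneg μ₁ μ'
    have h2 := tvDist_nonneg ν₁ ν'
    have h3 := Wp_nonneg p μ' ν'
    positivity
  -- gwSet μ ν is nonempty
  have hne : (gwSet a b p μ ν).Nonempty := by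
    refine ⟨a * tvDist μ 0 + a * tvDist ν 0 + b * Wp p 0 0,
      0, 0, inferInstance, inferInstance, ?_, ?_, rfl, rfl⟩ <;>
    · unfold FinMom; simp
  -- key estimate
  have key : ∀ r ∈ gwSet a b p μ ν, GW a b p (μ.map (Φ t)) (ν.map (Φ t)) ≤ Ec * r := by
    rintro r ⟨μ', ν', hfin1, hfin2, hm1, hm2, hmass, rfl⟩
    haveI := hfin1; haveI := hfin2
    have hmm1 : FinMom p (μ'.map (Φ t)) := finMom_map hp0.le hmeas hCt hfD μ' hm1
    have hmm2 : FinMom p (ν'.map (Φ t)) := finMom_map hp0.le hmeas hCt hfD ν' hm2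
    have hmass' : (μ'.map (Φ t)) Set.univ = (ν'.map (Φ t)) Set.univ := by
      simp only [Measure.map_apply hmeas MeasurableSet.univ, Set.preimage_univ, hmass]
    have hmem : a * tvDist (μ.map (Φ t)) (μ'.map (Φ t)) +
        a * tvDist (ν.map (Φ t)) (ν'.map (Φ t)) +
        b * Wp p (μ'.map (Φ t)) (ν'.map (Φ t)) ∈
        gwSet a b p (μ.map (Φ t)) (ν.map (Φ t)) :=
      ⟨μ'.map (Φ t), ν'.map (Φ t), inferInstance, inferInstance, hmm1, hmm2, hmass', rfl⟩
    have hle1 : GW a b p (μ.map (Φ t)) (ν.map (Φ t)) ≤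
        a * tvDist (μ.map (Φ t)) (μ'.map (Φ t)) +
        a * tvDist (ν.map (Φ t)) (ν'.map (Φ t)) +
        b * Wp p (μ'.map (Φ t)) (ν'.map (Φ t)) :=
      csInf_le ⟨0, fun r hr => hlb _ _ r hr⟩ hmem
    have ht1 : tvDist (μ.map (Φ t)) (μ'.map (Φ t)) ≤ tvDist μ μ' := tvDist_map_le hmeas μ μ'
    have ht2 : tvDist (ν.map (Φ t)) (ν'.map (Φ t)) ≤ tvDist ν ν' := tvDist_map_le hmeas ν ν'
    have hw : Wp p (μ'.map (Φ t)) (ν'.map (Φ t)) ≤ K * Wp p μ' ν' :=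
      wp_map_le hp hmeas hK0 hdist μ' ν' hm1 hm2 hmass
    have h1 := tvDist_nonneg μ μ'
    have h2 := tvDist_nonneg ν ν'
    have h3 := Wp_nonneg p μ' ν'
    have h1' := tvDist_nonneg (μ.map (Φ t)) (μ'.map (Φ t))
    have h2' := tvDist_nonneg (ν.map (Φ t)) (ν'.map (Φ t))
    have h3' := Wp_nonneg p (μ'.map (Φ t)) (ν'.map (Φ t))
    have hE1 : 1 ≤ Ec := hK1.trans hKE
    have e1 : a * tvDist (μ.map (Φ t)) (μ'.map (Φ t)) ≤ Ec * (a * tvDist μ μ') :=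
      le_trans (mul_le_mul_of_nonneg_left ht1 ha.le)
        (le_mul_of_one_le_left (by positivity) hE1)
    have e2 : a * tvDist (ν.map (Φ t)) (ν'.map (Φ t)) ≤ Ec * (a * tvDist ν ν') :=
      le_trans (mul_le_mul_of_nonneg_left ht2 ha.le)
        (le_mul_of_one_le_left (by positivity) hE1)
    have e3 : b * Wp p (μ'.map (Φ t)) (ν'.map (Φ t)) ≤ Ec * (b * Wp p μ' ν') := by
      have hwe : Wp p (μ'.map (Φ t)) (ν'.map (Φ t)) ≤ Ec * Wp p μ' ν' :=
        hw.trans (mul_le_mul_of_nonneg_right hKE h3)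
      calc b * Wp p (μ'.map (Φ t)) (ν'.map (Φ t)) ≤ b * (Ec * Wp p μ' ν') :=
            mul_le_mul_of_nonneg_left hwe hb.le
        _ = Ec * (b * Wp p μ' ν') := by ring
    calc GW a b p (μ.map (Φ t)) (ν.map (Φ t)) ≤ _ := hle1
      _ ≤ Ec * (a * tvDist μ μ') + Ec * (a * tvDist ν ν') + Ec * (b * Wp p μ' ν') := by
          linarith
      _ = Ec * (a * tvDist μ μ' + a * tvDist ν ν' + b * Wp p μ' ν') := by ring
  -- conclude
  unfold GW
  have hfinal : sInf (gwSet a b p (μ.map (Φ t)) (ν.map (Φ t))) / Ec ≤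
      sInf (gwSet a b p μ ν) := by
    apply le_csInf hne
    intro r hr
    rw [div_le_iff₀ hE0, mul_comm]
    exact key r hr
  rw [div_le_iff₀ hE0] at hfinal
  linarith [hfinal]
end
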